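/- arXiv:1506.03040 — 4 statements merged into one kernel-verified Lean document; each statement's English description precedes it below -/
import Mathlib

section
/- Let Φ ∈ ℝ^{M×N} satisfy the (s,γ)-NSP with 0 < γ < 1. Let x ∈ ℝ^N, y ∈ ℝ^M and ε ≥ 0 satisfy ‖y − Φx‖₂ ≤ ε, and let x̂ be a minimizer of ‖x̄‖₁ over all x̄ ∈ ℝ^N with ‖Φx̄ − y‖₂ ≤ ε. Then ‖x̂ − x‖₁ ≤ (4√2·√N/((1−γ)·λ(Φ)))·ε + (4(1+γ)/(√2·(1−γ)))·σ_s(x). -/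
open scoped BigOperators Matrix

/-- The Euclidean (ℓ²) norm of a real vector. -/
noncomputable def l2norm {ι : Type*} [Fintype ι] (v : ι → ℝ) : ℝ :=
  Real.sqrt (∑ i, (v i) ^ 2)

/-- The ℓ¹ norm of a real vector. -/
noncomputable def l1norm {ι : Type*} [Fintype ι] (v : ι → ℝ) : ℝ :=
  ∑ i, |v i|

/-- `v` has at most `k` nonzero entries. -/
def IsSparse {ι : Type*} {α : Type*} [Zero α] (k : ℕ) (v : ι → α) : Prop :=
  ∃ T : Finset ι, T.card ≤ k ∧ ∀ i ∉ T, v i = 0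

/-- The restricted isometry property of order `k` with constant `δ`. -/
def HasRIP {M N : ℕ} (Φ : Matrix (Fin M) (Fin N) ℝ) (k : ℕ) (δ : ℝ) : Prop :=
  ∀ v : Fin N → ℝ, IsSparse k v →
    (1 - δ) * l2norm v ^ 2 ≤ l2norm (Φ.mulVec v) ^ 2 ∧
      l2norm (Φ.mulVec v) ^ 2 ≤ (1 + δ) * l2norm v ^ 2

/-- `Φ` has the same null space as some matrix with RIP of order `k`, constant `δ`. -/
def HasRIPNSP {M N : ℕ} (Φ : Matrix (Fin M) (Fin N) ℝ) (k : ℕ) (δ : ℝ) : Prop :=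
  ∃ A : Matrix (Fin M) (Fin N) ℝ,
    {v : Fin N → ℝ | A.mulVec v = 0} = {v : Fin N → ℝ | Φ.mulVec v = 0} ∧ HasRIP A k δ

/-- The null space property of order `s` with constant `γ`. -/
def HasNSP {M N : ℕ} (Φ : Matrix (Fin M) (Fin N) ℝ) (s : ℕ) (γ : ℝ) : Prop :=
  ∀ v : Fin N → ℝ, Φ.mulVec v = 0 → ∀ T : Finset (Fin N), T.card ≤ s →
    ∑ i ∈ T, |v i| ≤ γ * ∑ i ∈ Tᶜ, |v i|

/-- `σ_s(x)`: the ℓ¹ distance from `x` to the set of `s`-sparse vectors. -/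
noncomputable def sigmaApprox {N : ℕ} (s : ℕ) (x : Fin N → ℝ) : ℝ :=
  sInf { t : ℝ | ∃ y : Fin N → ℝ, IsSparse s y ∧ t = l1norm (x - y) }

/-- The smallest positive singular value of `Φ`: the infimum of `‖Φx‖₂` over unit
vectors `x` orthogonal to the kernel of `Φ`. -/
noncomputable def smallestPosSV {M N : ℕ} (Φ : Matrix (Fin M) (Fin N) ℝ) : ℝ :=
  sInf { t : ℝ | ∃ x : Fin N → ℝ, l2norm x = 1 ∧
    (∀ y : Fin N → ℝ, Φ.mulVec y = 0 → x ⬝ᵥ y = 0) ∧ t = l2norm (Φ.mulVec x) }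

/-- The operator norm of `Φ` (sup of `‖Φx‖₂` over unit vectors). -/
noncomputable def opNorm {M N : ℕ} (Φ : Matrix (Fin M) (Fin N) ℝ) : ℝ :=
  sSup { t : ℝ | ∃ x : Fin N → ℝ, l2norm x = 1 ∧ t = l2norm (Φ.mulVec x) }

-- auxiliary lemmas
lemma l2norm_eq_norm {n : ℕ} (v : EuclideanSpace ℝ (Fin n)) : l2norm v = ‖v‖ := by
  rw [EuclideanSpace.norm_eq]; simp [l2norm, sq_abs]

lemma l1_le_sqrt_mul_l2 {n : ℕ} (v : Fin n → ℝ) :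
    l1norm v ≤ Real.sqrt n * l2norm v := by
  have h := Finset.sum_mul_sq_le_sq_mul_sq Finset.univ (fun _ => (1:ℝ)) (fun i => |v i|)
  simp only [one_mul, one_pow, sq_abs] at h
  have h1 : (0:ℝ) ≤ l1norm v := Finset.sum_nonneg fun i _ => abs_nonneg _
  calc l1norm v = Real.sqrt ((∑ i, |v i|)^2) := (Real.sqrt_sq h1).symm
    _ ≤ Real.sqrt ((∑ _i : Fin n, (1:ℝ)) * ∑ i, (v i)^2) := Real.sqrt_le_sqrt h
    _ = Real.sqrt n * l2norm v := by
        rw [Real.sqrt_mul (by positivity)]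
        simp [l2norm]

lemma l1norm_nonneg {n : ℕ} (v : Fin n → ℝ) : 0 ≤ l1norm v :=
  Finset.sum_nonneg fun _ _ => abs_nonneg _

lemma l2norm_sub_comm {n : ℕ} (a b : Fin n → ℝ) : l2norm (a - b) = l2norm (b - a) := by
  unfold l2norm
  congr 1
  apply Finset.sum_congr rfl
  intro i _
  simp only [Pi.sub_apply]
  ring

noncomputable def gmap {M N : ℕ} (Φ : Matrix (Fin M) (Fin N) ℝ) :
    EuclideanSpace ℝ (Fin N) →ₗ[ℝ] EuclideanSpace ℝ (Fin M) where
  toFun v := WithLp.toLp 2 (Φ.mulVec v)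
  map_add' u v := by simp [Matrix.mulVec_add]
  map_smul' c v := by simp [Matrix.mulVec_smul]

lemma mem_orth_iff {M N : ℕ} (Φ : Matrix (Fin M) (Fin N) ℝ) (u : EuclideanSpace ℝ (Fin N)) :
    u ∈ (LinearMap.ker (gmap Φ))ᗮ ↔ (∀ y : Fin N → ℝ, Φ.mulVec y = 0 → u ⬝ᵥ y = 0) := by
  rw [Submodule.mem_orthogonal]
  constructor
  · intro h y hy
    have hy' : (WithLp.toLp 2 y : EuclideanSpace ℝ (Fin N)) ∈ LinearMap.ker (gmap Φ) := by
      simpa [gmap, LinearMap.mem_ker] using hy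
    have := h (WithLp.toLp 2 y) hy'
    rw [PiLp.inner_apply] at this
    simpa [dotProduct, mul_comm] using this
  · intro h v hv
    rw [LinearMap.mem_ker] at hv
    have hv' : Φ.mulVec v = 0 := by have := congrArg WithLp.ofLp hv; simpa [gmap] using this
    have := h v hv'
    rw [PiLp.inner_apply]
    simpa [dotProduct, mul_comm] using this

lemma sSV_nonneg {M N : ℕ} (Φ : Matrix (Fin M) (Fin N) ℝ) : 0 ≤ smallestPosSV Φ := by
  apply Real.sInf_nonneg
  rintro t ⟨x, -, -, rfl⟩
  exact Real.sqrt_nonneg _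

lemma sSV_bddBelow {M N : ℕ} (Φ : Matrix (Fin M) (Fin N) ℝ) :
    BddBelow { t : ℝ | ∃ x : Fin N → ℝ, l2norm x = 1 ∧
      (∀ y : Fin N → ℝ, Φ.mulVec y = 0 → x ⬝ᵥ y = 0) ∧ t = l2norm (Φ.mulVec x) } := by
  refine ⟨0, ?_⟩
  rintro t ⟨x, -, -, rfl⟩
  exact Real.sqrt_nonneg _

lemma sSV_mul_le {M N : ℕ} (Φ : Matrix (Fin M) (Fin N) ℝ) (u : EuclideanSpace ℝ (Fin N))
    (hu : u ∈ (LinearMap.ker (gmap Φ))ᗮ) :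
    smallestPosSV Φ * ‖u‖ ≤ ‖gmap Φ u‖ := by
  rcases eq_or_ne u 0 with rfl | hne
  · simp
  · have hn : ‖u‖ ≠ 0 := norm_ne_zero_iff.mpr hne
    set w : EuclideanSpace ℝ (Fin N) := ‖u‖⁻¹ • u with hw
    have hwn : ‖w‖ = 1 := by
      rw [hw, norm_smul, norm_inv, norm_norm, inv_mul_cancel₀ hn]
    have hwmem : w ∈ (LinearMap.ker (gmap Φ))ᗮ := Submodule.smul_mem _ _ hu
    have hle : smallestPosSV Φ ≤ l2norm (Φ.mulVec w) := by
      apply csInf_le (sSV_bddBelow Φ)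
      exact ⟨w, by rw [l2norm_eq_norm]; exact hwn, (mem_orth_iff Φ w).mp hwmem, rfl⟩
    have hgw : ‖gmap Φ w‖ = ‖u‖⁻¹ * ‖gmap Φ u‖ := by
      rw [hw, map_smul, norm_smul, norm_inv, norm_norm]
    have hsame : l2norm (Φ.mulVec w) = ‖gmap Φ w‖ := l2norm_eq_norm (gmap Φ w)
    rw [hsame, hgw] at hle
    calc smallestPosSV Φ * ‖u‖ ≤ (‖u‖⁻¹ * ‖gmap Φ u‖) * ‖u‖ :=
          mul_le_mul_of_nonneg_right hle (norm_nonneg _)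
      _ = ‖gmap Φ u‖ := by field_simp

lemma sSV_pos {M N : ℕ} (Φ : Matrix (Fin M) (Fin N) ℝ) (u : EuclideanSpace ℝ (Fin N))
    (hu : u ∈ (LinearMap.ker (gmap Φ))ᗮ) (hne : u ≠ 0) :
    0 < smallestPosSV Φ := by
  set K := LinearMap.ker (gmap Φ)
  set A : Set (EuclideanSpace ℝ (Fin N)) := Metric.sphere 0 1 ∩ (Kᗮ : Set _)
  have hAc : IsCompact A := (isCompact_sphere 0 1).inter_right K.isClosed_orthogonal
  have hgc : Continuous fun v : EuclideanSpace ℝ (Fin N) => ‖gmap Φ v‖ :=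
    ((gmap Φ).continuous_of_finiteDimensional).norm
  have hset : { t : ℝ | ∃ x : Fin N → ℝ, l2norm x = 1 ∧
      (∀ y : Fin N → ℝ, Φ.mulVec y = 0 → x ⬝ᵥ y = 0) ∧ t = l2norm (Φ.mulVec x) }
      = (fun v : EuclideanSpace ℝ (Fin N) => ‖gmap Φ v‖) '' A := by
    ext t
    constructor
    · rintro ⟨x, h1, h2, rfl⟩
      refine ⟨WithLp.toLp 2 x, ⟨?_, (mem_orth_iff Φ (WithLp.toLp 2 x)).mpr h2⟩, (l2norm_eq_norm (gmap Φ (WithLp.toLp 2 x))).symm⟩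
      rw [Metric.mem_sphere, dist_zero_right, ← l2norm_eq_norm]; exact h1
    · rintro ⟨v, ⟨h1, h2⟩, rfl⟩
      refine ⟨v, ?_, (mem_orth_iff Φ v).mp h2, (l2norm_eq_norm (gmap Φ v)).symm⟩
      rw [l2norm_eq_norm]
      simpa [dist_zero_right] using h1
  have hAne : A.Nonempty := by
    refine ⟨‖u‖⁻¹ • u, ?_, Submodule.smul_mem _ _ hu⟩
    have hn : ‖u‖ ≠ 0 := norm_ne_zero_iff.mpr hne
    simp [Metric.mem_sphere, dist_zero_right, norm_smul, inv_mul_cancel₀ hn]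
  have hne2 : ((fun v : EuclideanSpace ℝ (Fin N) => ‖gmap Φ v‖) '' A).Nonempty :=
    hAne.image _
  have hcomp : IsCompact ((fun v : EuclideanSpace ℝ (Fin N) => ‖gmap Φ v‖) '' A) :=
    hAc.image hgc
  have hmem := hcomp.sInf_mem hne2
  rw [smallestPosSV, hset]
  rcases hmem with ⟨v, ⟨hv1, hv2⟩, hv3⟩
  rw [← hv3]
  have hvne : v ≠ 0 := by
    intro h
    rw [h] at hv1
    simp at hv1
  have hgv : gmap Φ v ≠ 0 := by
    intro h0
    have hvK : v ∈ K := LinearMap.mem_ker.mpr h0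
    have := Submodule.inner_right_of_mem_orthogonal hvK hv2
    rw [real_inner_self_eq_norm_sq] at this
    exact hvne (by simpa using norm_eq_zero.mp (by nlinarith [norm_nonneg v]))
  exact norm_pos_iff.mpr hgv


/-- **Theorem 2.2 (stability under NSP).**
If `Φ` has the `(s,γ)`-NSP with `0 < γ < 1`, `‖y - Φx‖₂ ≤ ε`, and `x̂` minimizes the
ℓ¹ norm subject to `‖Φx̄ - y‖₂ ≤ ε`, then
`‖x̂ - x‖₁ ≤ (4√2 √N /((1-γ) λ(Φ))) ε + (4(1+γ)/(√2 (1-γ))) σ_s(x)`. -/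
theorem stmt2 {s M N : ℕ} {γ : ℝ} (hγ0 : 0 < γ) (hγ1 : γ < 1)
    {Φ : Matrix (Fin M) (Fin N) ℝ} (hΦ : HasNSP Φ s γ)
    (x : Fin N → ℝ) (y : Fin M → ℝ) (ε : ℝ) (hε : 0 ≤ ε)
    (hxy : l2norm (y - Φ.mulVec x) ≤ ε)
    (xhat : Fin N → ℝ)
    (hfeas : l2norm (Φ.mulVec xhat - y) ≤ ε)
    (hmin : ∀ z : Fin N → ℝ, l2norm (Φ.mulVec z - y) ≤ ε → l1norm xhat ≤ l1norm z) :
    l1norm (xhat - x) ≤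
      (4 * Real.sqrt 2 * Real.sqrt (N : ℝ) / ((1 - γ) * smallestPosSV Φ)) * ε +
        (4 * (1 + γ) / (Real.sqrt 2 * (1 - γ))) * sigmaApprox s x := by
  have h1γ : (0:ℝ) < 1 - γ := by linarith
  have hsqrt2 : (1:ℝ) ≤ Real.sqrt 2 := by
    nlinarith [Real.sq_sqrt (by norm_num : (0:ℝ) ≤ 2), Real.sqrt_nonneg 2]
  have hsqrt2' : Real.sqrt 2 ≤ 2 := by
    nlinarith [Real.sq_sqrt (by norm_num : (0:ℝ) ≤ 2), Real.sqrt_nonneg 2]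
  -- x is feasible
  have hxfeas : l1norm xhat ≤ l1norm x := hmin x (by rw [l2norm_sub_comm]; exact hxy)
  -- set up decomposition
  have hdec : ∃ u : EuclideanSpace ℝ (Fin N), ∃ v ∈ LinearMap.ker (gmap Φ),
      ∃ w ∈ (LinearMap.ker (gmap Φ))ᗮ,
      u = (WithLp.toLp 2 (xhat - x : Fin N → ℝ) : EuclideanSpace ℝ (Fin N)) ∧ u = v + w := by
    set K : Submodule ℝ (EuclideanSpace ℝ (Fin N)) := LinearMap.ker (gmap Φ)
    set u : EuclideanSpace ℝ (Fin N) := (WithLp.toLp 2 (xhat - x : Fin N → ℝ) : EuclideanSpace ℝ (Fin N))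
    exact ⟨u, K.orthogonalProjectionOnto u, (K.orthogonalProjectionOnto u).2,
      u - K.orthogonalProjectionOnto u, Submodule.sub_starProjection_mem_orthogonal (K := K) u, rfl,
      by abel⟩
  obtain ⟨hE, v, hvmem, w, hwmem, hhE, hEvw⟩ := hdec
  have hvker : Φ.mulVec v = 0 := by
    have h0 : gmap Φ v = 0 := LinearMap.mem_ker.mp hvmem
    funext i
    have := congrFun (congrArg WithLp.ofLp h0) i
    simpa [gmap, PiLp.zero_apply] using this
  -- pointwise decomposition
  have hvw : (fun i => v i + w i) = xhat - x := by
    funext i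
    have h1 := congrFun (congrArg WithLp.ofLp hhE) i
    have h2 := congrFun (congrArg WithLp.ofLp hEvw) i
    rw [PiLp.add_apply] at h2
    rw [← h2, h1]
  -- ‖Φ(xhat-x)‖₂ ≤ 2ε
  have hΦh : l2norm (Φ.mulVec (xhat - x)) ≤ 2 * ε := by
    have e : Φ.mulVec (xhat - x) = (Φ.mulVec xhat - y) + (y - Φ.mulVec x) := by
      rw [Matrix.mulVec_sub]
      funext i
      simp only [Pi.sub_apply, Pi.add_apply]
      ring
    rw [e]
    have tri : l2norm ((Φ.mulVec xhat - y) + (y - Φ.mulVec x)) ≤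
        l2norm (Φ.mulVec xhat - y) + l2norm (y - Φ.mulVec x) := by
      have := norm_add_le (E := EuclideanSpace ℝ (Fin M)) (WithLp.toLp 2 (Φ.mulVec xhat - y)) (WithLp.toLp 2 (y - Φ.mulVec x))
      rw [← l2norm_eq_norm, ← l2norm_eq_norm, ← l2norm_eq_norm] at this
      exact this
    linarith
  -- g w = g hE
  have hgw : ‖gmap Φ w‖ ≤ 2 * ε := by
    have h0 : gmap Φ v = 0 := LinearMap.mem_ker.mp hvmem
    have e1 : gmap Φ w = gmap Φ hE := by
      rw [hEvw, map_add, h0, zero_add]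
    have e2 : gmap Φ hE = Φ.mulVec (xhat - x) := by
      rw [hhE]; rfl
    rw [e1, ← l2norm_eq_norm, e2]
    exact hΦh
  have hwbound : smallestPosSV Φ * ‖w‖ ≤ 2 * ε := by
    calc smallestPosSV Φ * ‖w‖ ≤ ‖gmap Φ w‖ := sSV_mul_le Φ w hwmem
      _ ≤ 2 * ε := hgw
  -- the key per-sparse-z bound
  have key : ∀ z : Fin N → ℝ, IsSparse s z →
      l1norm (xhat - x) ≤ (2 / (1 - γ)) * l1norm (w : Fin N → ℝ)
        + (2 * (1 + γ) / (1 - γ)) * l1norm (x - z) := by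
    rintro z ⟨T, hT, hz⟩
    have hN := hΦ v hvker T hT
    set VT := ∑ i ∈ T, |v i| with hVT
    set VC := ∑ i ∈ Tᶜ, |v i| with hVC
    set AT := ∑ i ∈ T, |x i + v i| with hAT
    set AC := ∑ i ∈ Tᶜ, |x i + v i| with hAC
    set XT := ∑ i ∈ T, |x i| with hXT
    set XC := ∑ i ∈ Tᶜ, |x i| with hXC
    set W := l1norm (w : Fin N → ℝ) with hW
    set Z := l1norm (x - z) with hZ
    clear_value VT VC AT AC XT XC W Z
    have f1 : XT ≤ AT + VT := by
      rw [hXT, hAT, hVT, ← Finset.sum_add_distrib]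
      apply Finset.sum_le_sum
      intro i _
      have := abs_add_le (x i + v i) (-(v i))
      simpa using this
    have f2 : VC ≤ AC + XC := by
      rw [hVC, hAC, hXC, ← Finset.sum_add_distrib]
      apply Finset.sum_le_sum
      intro i _
      have := abs_add_le (x i + v i) (-(x i))
      simpa [add_comm] using this
    have f4 : l1norm x = XT + XC := by
      rw [hXT, hXC]; exact (Finset.sum_add_sum_compl T _).symm
    have f3 : AT + AC ≤ l1norm x + W := by
      have e3 : ∀ i, x i + v i = xhat i - w i := by
        intro i
        have := congrFun hvw i
        simp only [Pi.sub_apply] at this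
        linarith [this]
      have e2 : l1norm (fun i => x i + v i) ≤ l1norm xhat + W := by
        calc l1norm (fun i => x i + v i) = ∑ i, |xhat i - w i| := by
              unfold l1norm; exact Finset.sum_congr rfl fun i _ => congrArg abs (e3 i)
          _ ≤ ∑ i, (|xhat i| + |w i|) := by
              apply Finset.sum_le_sum
              intro i _
              exact abs_sub _ _
          _ = l1norm xhat + W := by
              rw [hW, Finset.sum_add_distrib]; rfl
      have e1 : AT + AC = l1norm (fun i => x i + v i) := by
        rw [hAT, hAC]; exact Finset.sum_add_sum_compl T _
      rw [e1]
      linarith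
    have f6 : XC ≤ Z := by
      rw [hXC, hZ]
      calc ∑ i ∈ Tᶜ, |x i| = ∑ i ∈ Tᶜ, |x i - z i| := by
            apply Finset.sum_congr rfl
            intro i hi
            rw [hz i (Finset.mem_compl.mp hi)]
            ring_nf
        _ ≤ ∑ i, |x i - z i| := Finset.sum_le_sum_of_subset_of_nonneg
            (Finset.subset_univ _) (fun i _ _ => abs_nonneg _)
        _ = l1norm (x - z) := rfl
    have f7 : l1norm (xhat - x) ≤ VT + VC + W := by
      calc l1norm (xhat - x) = ∑ i, |v i + w i| := by
            unfold l1norm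
            apply Finset.sum_congr rfl
            intro i _
            rw [← congrFun hvw i]
        _ ≤ ∑ i, (|v i| + |w i|) := Finset.sum_le_sum fun i _ => abs_add_le _ _
        _ = (∑ i, |v i|) + W := by rw [hW, Finset.sum_add_distrib]; rfl
        _ = VT + VC + W := by
            rw [hVT, hVC, hW, Finset.sum_add_sum_compl]
    -- now arithmetic
    have hVCb : VC ≤ (2 * Z + W) / (1 - γ) := by
      rw [le_div_iff₀ h1γ]
      linarith [f1, f2, f3, f4, f6, hN]
    have hL : l1norm (xhat - x) ≤ (1 + γ) * VC + W := by
      have hvt : VT ≤ γ * VC := hN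
      linarith [f7]
    have h1γ' : (0:ℝ) ≤ 1 + γ := by linarith
    calc l1norm (xhat - x) ≤ (1 + γ) * VC + W := hL
      _ ≤ (1 + γ) * ((2 * Z + W) / (1 - γ)) + W :=
          add_le_add_left (mul_le_mul_of_nonneg_left hVCb h1γ') _
      _ = (2 / (1 - γ)) * W + (2 * (1 + γ) / (1 - γ)) * Z := by
          field_simp
          ring
  -- bound the W term by the ε term
  have hWterm : (2 / (1 - γ)) * l1norm (w : Fin N → ℝ) ≤
      (4 * Real.sqrt 2 * Real.sqrt (N : ℝ) / ((1 - γ) * smallestPosSV Φ)) * ε := by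
    rcases eq_or_ne w 0 with hw0 | hwne
    · have : l1norm (w : Fin N → ℝ) = 0 := by
        rw [hw0]
        unfold l1norm
        simp
      rw [this, mul_zero]
      have := sSV_nonneg Φ
      positivity
    · have hlam : 0 < smallestPosSV Φ := sSV_pos Φ w hwmem hwne
      have hwn : ‖w‖ ≤ 2 * ε / smallestPosSV Φ := by
        rw [le_div_iff₀ hlam]
        linarith [hwbound]
      have hl1w : l1norm (w : Fin N → ℝ) ≤ Real.sqrt N * ‖w‖ := by
        have := l1_le_sqrt_mul_l2 (w : Fin N → ℝ)
        rw [l2norm_eq_norm w] at this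
        exact this
      have step1 : (2 / (1 - γ)) * l1norm (w : Fin N → ℝ) ≤
          (2 / (1 - γ)) * (Real.sqrt N * (2 * ε / smallestPosSV Φ)) := by
        apply mul_le_mul_of_nonneg_left _ (by positivity)
        calc l1norm (w : Fin N → ℝ) ≤ Real.sqrt N * ‖w‖ := hl1w
          _ ≤ Real.sqrt N * (2 * ε / smallestPosSV Φ) :=
              mul_le_mul_of_nonneg_left hwn (Real.sqrt_nonneg _)
      calc (2 / (1 - γ)) * l1norm (w : Fin N → ℝ)
          ≤ (2 / (1 - γ)) * (Real.sqrt N * (2 * ε / smallestPosSV Φ)) := step1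
        _ = (4 * Real.sqrt N / ((1 - γ) * smallestPosSV Φ)) * ε := by
            field_simp
            ring
        _ ≤ (4 * Real.sqrt 2 * Real.sqrt (N : ℝ) / ((1 - γ) * smallestPosSV Φ)) * ε := by
            apply mul_le_mul_of_nonneg_right _ hε
            apply div_le_div_of_nonneg_right _ (by positivity)
            nlinarith [Real.sqrt_nonneg (N:ℝ)]
  -- combine: compare σ coefficient
  set C1 := (4 * Real.sqrt 2 * Real.sqrt (N : ℝ) / ((1 - γ) * smallestPosSV Φ)) * ε with hC1
  set D := 2 * (1 + γ) / (1 - γ) with hD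
  have hDpos : 0 < D := by positivity
  have key2 : ∀ z : Fin N → ℝ, IsSparse s z →
      l1norm (xhat - x) ≤ C1 + D * l1norm (x - z) := by
    intro z hzs
    calc l1norm (xhat - x) ≤ (2 / (1 - γ)) * l1norm (w : Fin N → ℝ) + D * l1norm (x - z) :=
          key z hzs
      _ ≤ C1 + D * l1norm (x - z) := by linarith [hWterm]
  -- σ is an inf
  have hSne : { t : ℝ | ∃ z : Fin N → ℝ, IsSparse s z ∧ t = l1norm (x - z) }.Nonempty :=
    ⟨l1norm (x - 0), 0, ⟨∅, by simp⟩, rfl⟩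
  have hσ : (l1norm (xhat - x) - C1) / D ≤ sigmaApprox s x := by
    apply le_csInf hSne
    rintro t ⟨z, hzs, rfl⟩
    rw [div_le_iff₀ hDpos]
    have := key2 z hzs
    linarith
  have hσ2 : l1norm (xhat - x) ≤ C1 + D * sigmaApprox s x := by
    rw [div_le_iff₀ hDpos] at hσ
    linarith
  have hσnn : 0 ≤ sigmaApprox s x := by
    apply Real.sInf_nonneg
    rintro t ⟨z, -, rfl⟩
    exact l1norm_nonneg _
  have hDle : D ≤ 4 * (1 + γ) / (Real.sqrt 2 * (1 - γ)) := by
    rw [hD, div_le_div_iff₀ h1γ (by positivity)]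
    have hp : 0 < (1 + γ) * (1 - γ) := by nlinarith
    nlinarith [hp, hsqrt2']
  calc l1norm (xhat - x) ≤ C1 + D * sigmaApprox s x := hσ2
    _ ≤ C1 + (4 * (1 + γ) / (Real.sqrt 2 * (1 - γ))) * sigmaApprox s x :=
        add_le_add_right (mul_le_mul_of_nonneg_right hDle hσnn) _
end

section
/- Let V ⊆ ℝ^N be a linear subspace and s a positive integer. Then the following are equivalent: (i) for every nonzero v ∈ V and every index set T ⊆ {1,...,N} with |T| ≤ s, ‖v_T‖₁ < ‖v_{T^c}‖₁; (ii) there exists γ with 0 < γ < 1 such that for every v ∈ V and every index set T with |T| ≤ s, ‖v_T‖₁ ≤ γ·‖v_{T^c}‖₁. -/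
open scoped BigOperators Matrix

/-- **Equivalence of the two forms of the null space property for a subspace.**
A subspace `V ⊆ ℝ^N` satisfies the strict NSP of order `s` iff it satisfies the NSP of
order `s` with some constant `γ ∈ (0,1)`. -/
theorem stmt4 {N : ℕ} (V : Submodule ℝ (Fin N → ℝ)) (s : ℕ) (hs : 0 < s) :
    (∀ v ∈ V, v ≠ 0 → ∀ T : Finset (Fin N), T.card ≤ s →
        ∑ i ∈ T, |v i| < ∑ i ∈ Tᶜ, |v i|) ↔
      (∃ γ : ℝ, 0 < γ ∧ γ < 1 ∧ ∀ v ∈ V, ∀ T : Finset (Fin N), T.card ≤ s →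
        ∑ i ∈ T, |v i| ≤ γ * ∑ i ∈ Tᶜ, |v i|) := by
  constructor
  · intro h
    by_cases hK : ∃ v0 ∈ V, v0 ≠ 0
    · obtain ⟨v0, hv0V, hv0⟩ := hK
      -- normalization lemma
      have key : ∀ v : Fin N → ℝ, v ≠ 0 → ∀ S : Finset (Fin N),
          ∑ i ∈ S, |((∑ i, |v i|)⁻¹ • v) i| = (∑ i, |v i|)⁻¹ * ∑ i ∈ S, |v i| := by
        intro v hv S
        rw [Finset.mul_sum]
        refine Finset.sum_congr rfl fun i _ => ?_
        have : ((∑ i, |v i|)⁻¹ • v) i = (∑ i, |v i|)⁻¹ * v i := rfl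
        rw [this, abs_mul, abs_of_nonneg (by positivity)]
      have hpos : ∀ v : Fin N → ℝ, v ≠ 0 → 0 < ∑ i, |v i| := by
        intro v hv
        obtain ⟨i, hi⟩ := Function.ne_iff.mp hv
        calc (0:ℝ) < |v i| := abs_pos.mpr hi
          _ ≤ ∑ i, |v i| := Finset.single_le_sum (f := fun j => |v j|)
              (fun j _ => abs_nonneg _) (Finset.mem_univ i)
      set K : Set (Fin N → ℝ) := (V : Set (Fin N → ℝ)) ∩ {v | ∑ i, |v i| = 1} with hKdef
      have hsum_cont : Continuous fun v : Fin N → ℝ => ∑ i, |v i| :=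
        continuous_finset_sum _ fun i _ => (continuous_apply i).abs
      have hKclosed : IsClosed K :=
        (Submodule.closed_of_finiteDimensional V).inter
          (isClosed_eq hsum_cont continuous_const)
      have hKbdd : Bornology.IsBounded K := by
        refine (Metric.isBounded_closedBall (x := (0 : Fin N → ℝ)) (r := 1)).subset ?_
        rintro v ⟨-, hv1⟩
        rw [Metric.mem_closedBall, dist_zero_right]
        refine pi_norm_le_iff_of_nonneg zero_le_one |>.mpr fun i => ?_
        rw [Real.norm_eq_abs]
        calc |v i| ≤ ∑ j, |v j| := Finset.single_le_sum (f := fun j => |v j|)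
              (fun j _ => abs_nonneg _) (Finset.mem_univ i)
          _ = 1 := hv1
      have hKcomp : IsCompact K := Metric.isCompact_of_isClosed_isBounded hKclosed hKbdd
      -- the normalized v0 is in K
      set a0 := ∑ i, |v0 i| with ha0
      have ha0pos : 0 < a0 := hpos v0 hv0
      set w0 : Fin N → ℝ := a0⁻¹ • v0 with hw0
      have hw0K : w0 ∈ K := by
        constructor
        · exact V.smul_mem _ hv0V
        · have := key v0 hv0 Finset.univ
          simpa [hw0, ← ha0, inv_mul_cancel₀ (ne_of_gt ha0pos)] using this
      have hKne : K.Nonempty := ⟨w0, hw0K⟩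
      -- for each admissible T, a max constant
      have hmax : ∀ T : Finset (Fin N), T.card ≤ s →
          ∃ c : ℝ, c < 1/2 ∧ ∀ v ∈ K, ∑ i ∈ T, |v i| ≤ c := by
        intro T hT
        obtain ⟨vT, hvTK, hvTmax⟩ := hKcomp.exists_isMaxOn hKne
          ((continuous_finset_sum _ fun i _ => (continuous_apply i).abs).continuousOn
            (s := K))
        refine ⟨∑ i ∈ T, |vT i|, ?_, fun v hv => hvTmax hv⟩
        obtain ⟨hvTV, hvT1⟩ := hvTK
        have hvTne : vT ≠ 0 := by
          intro h0
          rw [h0] at hvT1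
          simp at hvT1
        have hlt := h vT hvTV hvTne T hT
        have hsplit : ∑ i ∈ T, |vT i| + ∑ i ∈ Tᶜ, |vT i| = 1 := by
          rw [Finset.sum_add_sum_compl]; exact hvT1
        linarith
      choose! c hc1 hc2 using hmax
      set S : Finset (Finset (Fin N)) :=
        Finset.univ.filter (fun T => T.card ≤ s) with hSdef
      have hSne : S.Nonempty :=
        ⟨∅, by simp [hSdef, Nat.zero_le]⟩
      set cmax := S.sup' hSne c with hcmax
      have hcmax_lt : cmax < 1/2 := by
        rw [hcmax, Finset.sup'_lt_iff]
        intro T hT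
        exact hc1 T (by simpa [hSdef] using hT)
      have hcmax_ge : ∀ T : Finset (Fin N), T.card ≤ s → ∀ v ∈ K,
          ∑ i ∈ T, |v i| ≤ cmax := by
        intro T hT v hv
        calc ∑ i ∈ T, |v i| ≤ c T := hc2 T hT v hv
          _ ≤ cmax := Finset.le_sup' c (by simp [hSdef, hT])
      have hcmax_pos : 0 < cmax := by
        have hw0ne : w0 ≠ 0 := by
          intro h0
          have := hw0K.2
          rw [h0] at this
          simp at this
        obtain ⟨i, hi⟩ := Function.ne_iff.mp hw0ne
        have h1 : |w0 i| ≤ cmax := by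
          have := hcmax_ge {i} (by simpa using Nat.one_le_iff_ne_zero.mpr hs.ne') w0 hw0K
          simpa using this
        have := abs_pos.mpr hi
        linarith
      refine ⟨cmax / (1 - cmax), div_pos hcmax_pos (by linarith), ?_, ?_⟩
      · rw [div_lt_one (by linarith)]; linarith
      · intro v hv T hT
        by_cases hvz : v = 0
        · simp [hvz]
        · set a := ∑ i, |v i| with ha
          have hapos : 0 < a := hpos v hvz
          set w : Fin N → ℝ := a⁻¹ • v with hw
          have hwK : w ∈ K := by
            constructor
            · exact V.smul_mem _ hv
            · have := key v hvz Finset.univ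
              simpa [hw, ← ha, inv_mul_cancel₀ (ne_of_gt hapos)] using this
          set t := ∑ i ∈ T, |w i| with ht
          have htc : t ≤ cmax := hcmax_ge T hT w hwK
          have hsplit : t + ∑ i ∈ Tᶜ, |w i| = 1 := by
            rw [ht, Finset.sum_add_sum_compl]; exact hwK.2
          have hstep : t ≤ cmax / (1 - cmax) * (1 - t) := by
            rw [div_mul_eq_mul_div, le_div_iff₀ (by linarith)]
            nlinarith
          have hTv : ∑ i ∈ T, |v i| = a * t := by
            have := key v hvz T
            rw [← ha, ← hw] at this
            rw [ht, this]
            field_simp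
          have hTcv : ∑ i ∈ Tᶜ, |v i| = a * (1 - t) := by
            have := key v hvz Tᶜ
            rw [← ha, ← hw] at this
            have h2 : ∑ i ∈ Tᶜ, |w i| = 1 - t := by linarith
            rw [h2] at this
            have : ∑ i ∈ Tᶜ, |v i| = a * (1 - t) := by
              field_simp at this ⊢
              linarith [this]
            exact this
          rw [hTv, hTcv]
          calc a * t ≤ a * (cmax / (1 - cmax) * (1 - t)) := by
                exact mul_le_mul_of_nonneg_left hstep (le_of_lt hapos)
            _ = cmax / (1 - cmax) * (a * (1 - t)) := by ring
    · push_neg at hK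
      refine ⟨1/2, by norm_num, by norm_num, fun v hv T hT => ?_⟩
      have := hK v hv
      simp [this]
  · rintro ⟨γ, hγ0, hγ1, hγ⟩ v hv hvne T hT
    have h1 := hγ v hv T hT
    have hc : 0 < ∑ i ∈ Tᶜ, |v i| := by
      rcases lt_or_eq_of_le (Finset.sum_nonneg fun i _ => abs_nonneg (v i)) with h | h
      · exact h
      · exfalso
        apply hvne
        have hTz : ∑ i ∈ T, |v i| = 0 :=
          le_antisymm (by nlinarith [h1, h.symm]) (Finset.sum_nonneg fun i _ => abs_nonneg _)
        have hall : ∀ i, |v i| = 0 := by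
          intro i
          by_cases hi : i ∈ T
          · exact (Finset.sum_eq_zero_iff_of_nonneg fun j _ => abs_nonneg _).mp hTz i hi
          · exact (Finset.sum_eq_zero_iff_of_nonneg fun j _ => abs_nonneg _).mp h.symm i
              (Finset.mem_compl.mpr hi)
        funext i
        exact abs_eq_zero.mp (hall i)
    calc ∑ i ∈ T, |v i| ≤ γ * ∑ i ∈ Tᶜ, |v i| := h1
      _ < 1 * ∑ i ∈ Tᶜ, |v i| := by exact mul_lt_mul_of_pos_right hγ1 hc
      _ = ∑ i ∈ Tᶜ, |v i| := one_mul _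
end

section
/- If a matrix Φ ∈ ℝ^{M×N} satisfies the RIP of order k with constant δ ∈ (0,1), then its operator norm satisfies ‖Φ‖_op ≤ √(N/k + 1)·√(1+δ). -/
open scoped BigOperators Matrix

lemma l2norm_nonneg' {ι : Type*} [Fintype ι] (v : ι → ℝ) : 0 ≤ l2norm v :=
  Real.sqrt_nonneg _

lemma l2norm_sq' {ι : Type*} [Fintype ι] (v : ι → ℝ) : l2norm v ^ 2 = ∑ i, v i ^ 2 :=
  Real.sq_sqrt (Finset.sum_nonneg fun _ _ => sq_nonneg _)

lemma l2norm_eq_norm' {ι : Type*} [Fintype ι] (v : ι → ℝ) :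
    l2norm v = ‖(WithLp.equiv 2 (ι → ℝ)).symm v‖ := by
  rw [EuclideanSpace.norm_eq]
  simp only [l2norm, WithLp.equiv_symm_apply, WithLp.ofLp_toLp, Real.norm_eq_abs, sq_abs]

lemma l2norm_sum_le' {ι κ : Type*} [Fintype ι] [Fintype κ] (g : κ → ι → ℝ) :
    l2norm (∑ j, g j) ≤ ∑ j, l2norm (g j) := by
  simp only [l2norm_eq_norm']
  have h : (WithLp.equiv 2 (ι → ℝ)).symm (∑ j, g j)
      = ∑ j, (WithLp.equiv 2 (ι → ℝ)).symm (g j) :=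
    map_sum (WithLp.linearEquiv 2 ℝ (ι → ℝ)).symm g Finset.univ
  rw [h]
  exact norm_sum_le _ _

/-- **Lemma 3.1 (operator norm bound from RIP).**
If `Φ` has RIP of order `k` with constant `δ`, then `‖Φ‖_op ≤ √(N/k + 1) · √(1+δ)`. -/
theorem stmt5 {M N k : ℕ} (hk : 0 < k)
    {δ : ℝ} (hδ0 : 0 < δ) (hδ1 : δ < 1)
    {Φ : Matrix (Fin M) (Fin N) ℝ} (hΦ : HasRIP Φ k δ) :
    opNorm Φ ≤ Real.sqrt ((N : ℝ) / (k : ℝ) + 1) * Real.sqrt (1 + δ) := by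
  have hRHS : 0 ≤ Real.sqrt ((N : ℝ) / (k : ℝ) + 1) * Real.sqrt (1 + δ) := by positivity
  apply Real.sSup_le _ hRHS
  rintro t ⟨x, hx1, rfl⟩
  set m := N / k + 1 with hm
  set f : Fin m → (Fin N → ℝ) := fun j i => if (i : ℕ) / k = (j : ℕ) then x i else 0 with hf
  have hlt : ∀ i : Fin N, (i : ℕ) / k < m :=
    fun i => Nat.lt_succ_of_le (Nat.div_le_div_right i.2.le)
  have hxsum : x = ∑ j, f j := by
    funext i
    rw [Finset.sum_apply]
    rw [Finset.sum_eq_single (⟨(i : ℕ) / k, hlt i⟩ : Fin m)]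
    · simp [hf]
    · intro b _ hb
      simp only [hf]
      rw [if_neg]
      intro h
      exact hb (Fin.ext h.symm)
    · intro h
      exact absurd (Finset.mem_univ _) h
  have hsparse : ∀ j, IsSparse k (f j) := by
    intro j
    refine ⟨Finset.univ.filter (fun i => (i : ℕ) / k = (j : ℕ)), ?_, ?_⟩
    · have hinj : ∀ a ∈ Finset.univ.filter (fun i : Fin N => (i : ℕ) / k = (j : ℕ)),
          ∀ b ∈ Finset.univ.filter (fun i : Fin N => (i : ℕ) / k = (j : ℕ)),
          (⟨(a : ℕ) % k, Nat.mod_lt _ hk⟩ : Fin k) = ⟨(b : ℕ) % k, Nat.mod_lt _ hk⟩ → a = b := by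
        intro a ha b hb hab
        simp only [Finset.mem_filter, Finset.mem_univ, true_and] at ha hb
        have h1 : (a : ℕ) % k = (b : ℕ) % k := congrArg Fin.val hab
        have : (a : ℕ) = (b : ℕ) := by
          rw [← Nat.div_add_mod (a : ℕ) k, ← Nat.div_add_mod (b : ℕ) k, ha, hb, h1]
        exact Fin.ext this
      calc (Finset.univ.filter (fun i : Fin N => (i : ℕ) / k = (j : ℕ))).card
          ≤ (Finset.univ : Finset (Fin k)).card :=
            Finset.card_le_card_of_injOn (fun i => ⟨(i : ℕ) % k, Nat.mod_lt _ hk⟩)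
              (fun _ _ => Finset.mem_univ _) hinj
        _ = k := by simp
    · intro i hi
      simp only [Finset.mem_filter, Finset.mem_univ, true_and] at hi
      simp [hf, hi]
  have hpyth : ∑ j, l2norm (f j) ^ 2 = 1 := by
    have h1 : ∑ j, l2norm (f j) ^ 2 = ∑ j : Fin m, ∑ i, (f j i) ^ 2 := by
      simp only [l2norm_sq']
    rw [h1, Finset.sum_comm]
    have h2 : ∀ i : Fin N, ∑ j : Fin m, (f j i) ^ 2 = x i ^ 2 := by
      intro i
      rw [Finset.sum_eq_single (⟨(i : ℕ) / k, hlt i⟩ : Fin m)]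
      · simp [hf]
      · intro b _ hb
        simp only [hf]
        rw [if_neg, zero_pow two_ne_zero]
        intro h
        exact hb (Fin.ext h.symm)
      · intro h
        exact absurd (Finset.mem_univ _) h
    rw [Finset.sum_congr rfl (fun i _ => h2 i), ← l2norm_sq' x, hx1, one_pow]
  have hblock : ∀ j, l2norm (Φ.mulVec (f j)) ≤ Real.sqrt (1 + δ) * l2norm (f j) := by
    intro j
    have h := (hΦ (f j) (hsparse j)).2
    have h2 : (Real.sqrt (1 + δ) * l2norm (f j)) ^ 2 = (1 + δ) * l2norm (f j) ^ 2 := by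
      rw [mul_pow, Real.sq_sqrt (by linarith)]
    calc l2norm (Φ.mulVec (f j)) = Real.sqrt (l2norm (Φ.mulVec (f j)) ^ 2) :=
          (Real.sqrt_sq (l2norm_nonneg' _)).symm
      _ ≤ Real.sqrt ((Real.sqrt (1 + δ) * l2norm (f j)) ^ 2) :=
          Real.sqrt_le_sqrt (by rw [h2]; exact h)
      _ = Real.sqrt (1 + δ) * l2norm (f j) := Real.sqrt_sq (mul_nonneg (Real.sqrt_nonneg _) (l2norm_nonneg' _))
  have hmv : Φ.mulVec x = ∑ j, Φ.mulVec (f j) := by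
    rw [hxsum]
    simpa only [Matrix.mulVecLin_apply] using map_sum Φ.mulVecLin f Finset.univ
  have hCS : ∑ j, l2norm (f j) ≤ Real.sqrt m := by
    have h1 : (∑ j, l2norm (f j)) ^ 2 ≤ (m : ℝ) * ∑ j, l2norm (f j) ^ 2 := by
      simpa using sq_sum_le_card_mul_sum_sq (s := Finset.univ) (f := fun j => l2norm (f j))
    rw [hpyth, mul_one] at h1
    calc ∑ j, l2norm (f j) = Real.sqrt ((∑ j, l2norm (f j)) ^ 2) :=
          (Real.sqrt_sq (Finset.sum_nonneg fun j _ => l2norm_nonneg' _)).symm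
      _ ≤ Real.sqrt m := Real.sqrt_le_sqrt h1
  have hmle : Real.sqrt m ≤ Real.sqrt ((N : ℝ) / (k : ℝ) + 1) := by
    apply Real.sqrt_le_sqrt
    rw [hm]
    push_cast
    have := Nat.cast_div_le (α := ℝ) (m := N) (n := k)
    linarith
  calc l2norm (Φ.mulVec x) = l2norm (∑ j, Φ.mulVec (f j)) := by rw [hmv]
    _ ≤ ∑ j, l2norm (Φ.mulVec (f j)) := l2norm_sum_le' _
    _ ≤ ∑ j, Real.sqrt (1 + δ) * l2norm (f j) :=
        Finset.sum_le_sum fun j _ => hblock j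
    _ = Real.sqrt (1 + δ) * ∑ j, l2norm (f j) := by rw [Finset.mul_sum]
    _ ≤ Real.sqrt (1 + δ) * Real.sqrt m :=
        mul_le_mul_of_nonneg_left hCS (Real.sqrt_nonneg _)
    _ ≤ Real.sqrt (1 + δ) * Real.sqrt ((N : ℝ) / (k : ℝ) + 1) :=
        mul_le_mul_of_nonneg_left hmle (Real.sqrt_nonneg _)
    _ = Real.sqrt ((N : ℝ) / (k : ℝ) + 1) * Real.sqrt (1 + δ) := mul_comm _ _
end

section
/- Let Φ ∈ ℝ^{M×N} satisfy the RIP of order 2s with constant δ ∈ (0,1). Then Φ satisfies the null space property of order s with constant γ = √2·δ/(1−δ); that is, for every v ∈ ker Φ and every index set T ⊆ {1,...,N} with |T| ≤ s, ‖v_T‖₁ ≤ (√2·δ/(1−δ))·‖v_{T^c}‖₁. -/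
open scoped BigOperators Matrix

namespace Stmt8Aux

lemma l2sq {ι : Type*} [Fintype ι] (v : ι → ℝ) : l2norm v ^ 2 = ∑ i, v i ^ 2 :=
  Real.sq_sqrt (by positivity)

lemma l2nonneg {ι : Type*} [Fintype ι] (v : ι → ℝ) : 0 ≤ l2norm v :=
  Real.sqrt_nonneg _

lemma le_of_sq_le_sq' {a b : ℝ} (hb : 0 ≤ b) (h : a ^ 2 ≤ b ^ 2) (ha : 0 ≤ a) : a ≤ b := by
  nlinarith

lemma l2sq_dot {M : ℕ} (w : Fin M → ℝ) : l2norm w ^ 2 = w ⬝ᵥ w := by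
  simp only [l2sq, dotProduct]
  exact Finset.sum_congr rfl fun i _ => by ring

lemma l2_disj_sq {N : ℕ} {x y : Fin N → ℝ} (hd : ∀ i, x i = 0 ∨ y i = 0) :
    l2norm (x + y) ^ 2 = l2norm x ^ 2 + l2norm y ^ 2 := by
  simp only [l2sq, Pi.add_apply, ← Finset.sum_add_distrib]
  refine Finset.sum_congr rfl fun i _ => ?_
  rcases hd i with h | h <;> rw [h] <;> ring

lemma l2_disj_sq' {N : ℕ} {x y : Fin N → ℝ} (hd : ∀ i, x i = 0 ∨ y i = 0) :
    l2norm (x - y) ^ 2 = l2norm x ^ 2 + l2norm y ^ 2 := by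
  simp only [l2sq, Pi.sub_apply, ← Finset.sum_add_distrib]
  refine Finset.sum_congr rfl fun i _ => ?_
  rcases hd i with h | h <;> rw [h] <;> ring

lemma sparse_add {N k l : ℕ} {x y : Fin N → ℝ} (hx : IsSparse k x) (hy : IsSparse l y) :
    IsSparse (k + l) (x + y) := by
  obtain ⟨T, hT, hTx⟩ := hx
  obtain ⟨S, hS, hSy⟩ := hy
  refine ⟨T ∪ S, le_trans (Finset.card_union_le _ _) (by omega), fun i hi => ?_⟩
  simp only [Finset.mem_union, not_or] at hi
  simp [hTx i hi.1, hSy i hi.2]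

lemma sparse_sub {N k l : ℕ} {x y : Fin N → ℝ} (hx : IsSparse k x) (hy : IsSparse l y) :
    IsSparse (k + l) (x - y) := by
  obtain ⟨T, hT, hTx⟩ := hx
  obtain ⟨S, hS, hSy⟩ := hy
  refine ⟨T ∪ S, le_trans (Finset.card_union_le _ _) (by omega), fun i hi => ?_⟩
  simp only [Finset.mem_union, not_or] at hi
  simp [Pi.sub_apply, hTx i hi.1, hSy i hi.2]

lemma sparse_smul {N k : ℕ} {x : Fin N → ℝ} (c : ℝ) (hx : IsSparse k x) :
    IsSparse k (c • x) := by
  obtain ⟨T, hT, hTx⟩ := hx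
  exact ⟨T, hT, fun i hi => by simp [hTx i hi]⟩

lemma polar {M : ℕ} (a b : Fin M → ℝ) :
    l2norm (a + b) ^ 2 - l2norm (a - b) ^ 2 = 4 * (a ⬝ᵥ b) := by
  simp only [l2sq, dotProduct, Pi.add_apply, Pi.sub_apply]
  rw [Finset.mul_sum, ← Finset.sum_sub_distrib]
  exact Finset.sum_congr rfl fun i _ => by ring

/-- Candès' inner product bound from RIP. -/
lemma l2_smul_sq {N : ℕ} (c : ℝ) (v : Fin N → ℝ) :
    l2norm (c • v) ^ 2 = c ^ 2 * l2norm v ^ 2 := by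
  simp [l2sq, Finset.mul_sum, mul_pow]

lemma rip_inner {M N s : ℕ} {δ : ℝ} (hδ : 0 ≤ δ) {Φ : Matrix (Fin M) (Fin N) ℝ}
    (hΦ : HasRIP Φ (2 * s) δ) {x y : Fin N → ℝ}
    (hx : IsSparse s x) (hy : IsSparse s y) (hd : ∀ i, x i = 0 ∨ y i = 0) :
    Φ.mulVec x ⬝ᵥ Φ.mulVec y ≤ δ * (l2norm x * l2norm y) := by
  -- unscaled key inequality
  have key : ∀ x' y' : Fin N → ℝ, IsSparse s x' → IsSparse s y' →
      (∀ i, x' i = 0 ∨ y' i = 0) →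
      Φ.mulVec x' ⬝ᵥ Φ.mulVec y' ≤ δ * (l2norm x' ^ 2 + l2norm y' ^ 2) / 2 := by
    intro x' y' hx' hy' hd'
    have hsum : IsSparse (2 * s) (x' + y') := by
      have := sparse_add hx' hy'; rwa [two_mul]
    have hdiff : IsSparse (2 * s) (x' - y') := by
      have := sparse_sub hx' hy'; rwa [two_mul]
    have h1 := (hΦ _ hsum).2
    have h2 := (hΦ _ hdiff).1
    have e1 : l2norm (x' + y') ^ 2 = l2norm x' ^ 2 + l2norm y' ^ 2 := l2_disj_sq hd'
    have e2 : l2norm (x' - y') ^ 2 = l2norm x' ^ 2 + l2norm y' ^ 2 := l2_disj_sq' hd'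
    have hp : l2norm (Φ.mulVec x' + Φ.mulVec y') ^ 2
        - l2norm (Φ.mulVec x' - Φ.mulVec y') ^ 2
        = 4 * (Φ.mulVec x' ⬝ᵥ Φ.mulVec y') := polar _ _
    rw [← Matrix.mulVec_add, ← Matrix.mulVec_sub] at hp
    rw [e1] at h1
    rw [e2] at h2
    linarith
  set a := l2norm x with ha
  set b := l2norm y with hb
  have ha0 : 0 ≤ a := l2nonneg x
  have hb0 : 0 ≤ b := l2nonneg y
  rcases eq_or_lt_of_le ha0 with ha' | ha'
  · -- a = 0 so x = 0
    have hx0 : x = 0 := by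
      funext i
      have : ∑ j, x j ^ 2 = 0 := by
        have := l2sq x; rw [← ha, ← ha'] at this; simpa using this.symm
      have := (Finset.sum_eq_zero_iff_of_nonneg (fun j _ => sq_nonneg (x j))).1 this i
        (Finset.mem_univ i)
      exact pow_eq_zero_iff (n := 2) (by norm_num) |>.1 this
    have hz : Φ.mulVec x = 0 := by rw [hx0]; exact Matrix.mulVec_zero _
    rw [hz, zero_dotProduct, ← ha']
    simp
  rcases eq_or_lt_of_le hb0 with hb' | hb'
  · have hy0 : y = 0 := by
      funext i
      have : ∑ j, y j ^ 2 = 0 := by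
        have := l2sq y; rw [← hb, ← hb'] at this; simpa using this.symm
      have := (Finset.sum_eq_zero_iff_of_nonneg (fun j _ => sq_nonneg (y j))).1 this i
        (Finset.mem_univ i)
      exact pow_eq_zero_iff (n := 2) (by norm_num) |>.1 this
    have hz : Φ.mulVec y = 0 := by rw [hy0]; exact Matrix.mulVec_zero _
    rw [hz, dotProduct_zero, ← hb']
    simp
  · have hd' : ∀ i, (b • x) i = 0 ∨ (a • y) i = 0 := by
      intro i
      rcases hd i with h | h
      · left; simp [h]
      · right; simp [h]
    have h := key (b • x) (a • y) (sparse_smul b hx) (sparse_smul a hy) hd'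
    rw [Matrix.mulVec_smul, Matrix.mulVec_smul, smul_dotProduct,
      dotProduct_smul, smul_eq_mul, smul_eq_mul, l2_smul_sq, l2_smul_sq,
      ← ha, ← hb] at h
    have hab : 0 < a * b := mul_pos ha' hb'
    nlinarith [h]


lemma l2norm_neg {N : ℕ} (w : Fin N → ℝ) : l2norm (-w) = l2norm w := by
  simp [l2norm, neg_sq]

lemma l2norm_zero {N : ℕ} : l2norm (0 : Fin N → ℝ) = 0 := by
  simp [l2norm]

lemma sparse_neg {N k : ℕ} {x : Fin N → ℝ} (hx : IsSparse k x) : IsSparse k (-x) := by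
  obtain ⟨T, hT, hTx⟩ := hx
  exact ⟨T, hT, fun i hi => by simp [hTx i hi]⟩

lemma dot_sum {M : ℕ} (w : Fin M → ℝ) {ι : Type*} (t : Finset ι) (f : ι → Fin M → ℝ) :
    w ⬝ᵥ (∑ j ∈ t, f j) = ∑ j ∈ t, w ⬝ᵥ f j := by
  simp only [dotProduct, Finset.sum_apply, Finset.mul_sum]
  exact Finset.sum_comm

noncomputable def restr {N : ℕ} (T : Finset (Fin N)) (v : Fin N → ℝ) : Fin N → ℝ :=
  fun i => if i ∈ T then v i else 0

lemma restr_sq {N : ℕ} (T : Finset (Fin N)) (v : Fin N → ℝ) :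
    l2norm (restr T v) ^ 2 = ∑ i ∈ T, v i ^ 2 := by
  simp only [l2sq, restr, apply_ite (· ^ (2:ℕ))]
  simp [Finset.sum_ite_mem]

lemma sum_abs_le_of_card_le {N : ℕ} (v : Fin N → ℝ) (A C : Finset (Fin N))
    (hcard : A.card ≤ C.card)
    (h : ∀ i ∈ A, ∀ k ∈ C, |v i| ≤ |v k|) :
    ∑ i ∈ A, |v i| ≤ ∑ k ∈ C, |v k| := by
  rcases Finset.eq_empty_or_nonempty C with hC | hC
  · rw [hC] at hcard
    simp only [Finset.card_empty, Nat.le_zero, Finset.card_eq_zero] at hcard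
    simp [hcard, hC]
  · set m := C.inf' hC (fun k => |v k|) with hm
    have hm0 : 0 ≤ m := Finset.le_inf' hC _ (fun k _ => abs_nonneg _)
    calc ∑ i ∈ A, |v i| ≤ A.card • m := Finset.sum_le_card_nsmul _ _ _
          (fun i hi => Finset.le_inf' hC _ (fun k hk => h i hi k hk))
      _ ≤ C.card • m := nsmul_le_nsmul_left hm0 hcard
      _ ≤ ∑ k ∈ C, |v k| := Finset.card_nsmul_le_sum _ _ _ (fun k hk => Finset.inf'_le _ hk)

end Stmt8Aux

open Stmt8Aux

/-- **Lemma 3.5 (Candès): RIP implies NSP.**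
If `Φ` has RIP of order `2s` with constant `δ ∈ (0,1)`, then `Φ` has the `(s,γ)`-NSP
with `γ = √2 δ / (1 - δ)`. -/
theorem stmt8 {s M N : ℕ}
    {δ : ℝ} (hδ0 : 0 < δ) (hδ1 : δ < 1)
    {Φ : Matrix (Fin M) (Fin N) ℝ} (hΦ : HasRIP Φ (2 * s) δ) :
    HasNSP Φ s (Real.sqrt 2 * δ / (1 - δ)) := by
  classical
  have h1δ : (0:ℝ) < 1 - δ := by linarith
  have hγ0 : 0 ≤ Real.sqrt 2 * δ / (1 - δ) :=
    div_nonneg (mul_nonneg (Real.sqrt_nonneg 2) hδ0.le) h1δ.le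
  intro v hv T hT
  rcases Nat.eq_zero_or_pos s with hs | hs
  · have hTe : T = ∅ := Finset.card_eq_zero.mp (by omega)
    subst hTe
    simp only [Finset.sum_empty]
    exact mul_nonneg hγ0 (Finset.sum_nonneg fun i _ => abs_nonneg _)
  set π := Tuple.sort (fun i : Fin N => -|v i|) with hπ
  have hmono := Tuple.monotone_sort (fun i : Fin N => -|v i|)
  have anti : ∀ i k : Fin N, (π.symm k : ℕ) ≤ (π.symm i : ℕ) → |v i| ≤ |v k| := by
    intro i k h
    have h' : π.symm k ≤ π.symm i := h
    have := hmono h'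
    simp only [Function.comp_apply, ← hπ, Equiv.apply_symm_apply] at this
    linarith
  set B : ℕ → Finset (Fin N) :=
    fun j => Finset.univ.filter (fun i => ((π.symm i : Fin N) : ℕ) / s = j) with hB
  have memB : ∀ (j : ℕ) (i : Fin N), i ∈ B j ↔ (π.symm i : ℕ) / s = j := by
    intro j i; simp [hB]
  have cardB_le : ∀ j, (B j).card ≤ s := by
    intro j
    have h1 : (B j).card ≤ (Finset.Ico (j*s) ((j+1)*s)).card := by
      apply Finset.card_le_card_of_injOn (fun i => (π.symm i : ℕ))
      · intro i hi
        rw [Finset.mem_coe, memB] at hi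
        rw [Finset.mem_coe, Finset.mem_Ico]
        constructor
        · calc j*s = ((π.symm i : ℕ)/s)*s := by rw [hi]
            _ ≤ (π.symm i : ℕ) := Nat.div_mul_le_self _ _
        · exact (Nat.div_lt_iff_lt_mul hs).1 (by beta_reduce; omega)
      · intro i hi k hk h
        exact π.symm.injective (Fin.val_injective h)
    rw [Nat.card_Ico] at h1
    calc (B j).card ≤ (j+1)*s - j*s := h1
      _ = s := by rw [Nat.succ_mul]; omega
  have cardB_ge : ∀ j, (j+1)*s ≤ N → s ≤ (B j).card := by
    intro j hjN
    have hN0 : 0 < N := by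
      have : s ≤ N := le_trans (by calc s = 1*s := (one_mul s).symm
        _ ≤ (j+1)*s := Nat.mul_le_mul_right s (by omega)) hjN
      omega
    have h1 : (Finset.Ico (j*s) ((j+1)*s)).card ≤ (B j).card := by
      apply Finset.card_le_card_of_injOn (fun m => π ⟨m % N, Nat.mod_lt _ hN0⟩)
      · intro m hm
        rw [Finset.mem_coe, Finset.mem_Ico] at hm
        have hmN : m < N := lt_of_lt_of_le hm.2 hjN
        rw [Finset.mem_coe, memB]
        simp only [Equiv.symm_apply_apply]
        rw [Nat.mod_eq_of_lt hmN]
        exact Nat.div_eq_of_lt_le hm.1 hm.2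
      · intro m hm m' hm' h
        simp only [Finset.coe_Ico, Set.mem_Ico] at hm hm'
        have hmN : m < N := lt_of_lt_of_le hm.2 hjN
        have hmN' : m' < N := lt_of_lt_of_le hm'.2 hjN
        have h2 : m % N = m' % N := congrArg Fin.val (π.injective h)
        rwa [Nat.mod_eq_of_lt hmN, Nat.mod_eq_of_lt hmN'] at h2
    rw [Nat.card_Ico] at h1
    calc s = (j+1)*s - j*s := by rw [Nat.succ_mul]; omega
      _ ≤ (B j).card := h1
  have full : ∀ j, (B (j+1)).Nonempty → s ≤ (B j).card := by
    rintro j ⟨i, hi⟩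
    rw [memB] at hi
    apply cardB_ge
    have h1 : (j+1)*s ≤ (π.symm i : ℕ) := by
      calc (j+1)*s = ((π.symm i : ℕ)/s)*s := by rw [hi]
        _ ≤ (π.symm i : ℕ) := Nat.div_mul_le_self _ _
    exact le_trans h1 (le_of_lt (π.symm i).isLt)
  set K : ℕ := N / s + 2 with hK
  have hKlt : ∀ i : Fin N, (π.symm i : ℕ) / s < K := by
    intro i
    calc (π.symm i : ℕ) / s ≤ N / s :=
          Nat.div_le_div_right (le_of_lt (π.symm i).isLt)
      _ < K := by rw [hK]; exact Nat.lt_add_of_pos_right (by norm_num)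
  set u : ℕ → Fin N → ℝ := fun j => restr (B j) v with hu
  have sparse_u : ∀ j, IsSparse s (u j) :=
    fun j => ⟨B j, cardB_le j, fun i hi => if_neg hi⟩
  have disj : ∀ j l, j ≠ l → ∀ i, u j i = 0 ∨ u l i = 0 := by
    intro j l hjl i
    by_cases hij : i ∈ B j
    · right
      rw [memB] at hij
      exact if_neg (by rw [memB]; omega)
    · left; exact if_neg hij
  have decomp : v = ∑ j ∈ Finset.range K, u j := by
    funext i
    rw [Finset.sum_apply]
    rw [Finset.sum_eq_single_of_mem ((π.symm i : ℕ)/s)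
      (Finset.mem_range.mpr (hKlt i))]
    · exact (if_pos ((memB _ i).mpr rfl)).symm
    · intro j _ hj
      exact if_neg (fun hc => hj ((memB j i).mp hc).symm)
  have hker0 : ∑ j ∈ Finset.range K, Φ.mulVec (u j) = 0 := by
    calc ∑ j ∈ Finset.range K, Φ.mulVec (u j)
        = ∑ j ∈ Finset.range K, Φ.mulVecLin (u j) := by
          simp [Matrix.mulVecLin_apply]
      _ = Φ.mulVecLin (∑ j ∈ Finset.range K, u j) := (map_sum _ _ _).symm
      _ = Φ.mulVec v := by rw [← decomp, Matrix.mulVecLin_apply]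
      _ = 0 := hv
  have hK2 : 2 ≤ K := by rw [hK]; exact Nat.le_add_left 2 (N/s)
  have hsplit : Φ.mulVec (u 0) + Φ.mulVec (u 1)
      + ∑ j ∈ Finset.Ico 2 K, Φ.mulVec (u j) = 0 := by
    rw [← hker0, Finset.range_eq_Ico,
      ← Finset.sum_Ico_consecutive _ (Nat.zero_le 2) hK2]
    congr 1
    have he : Finset.Ico 0 2 = {0, 1} := by rfl
    rw [he]
    rw [Finset.sum_insert (by norm_num), Finset.sum_singleton]
  set h : Fin N → ℝ := u 0 + u 1 with hh
  have hh2s : IsSparse (2*s) h := by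
    have := sparse_add (sparse_u 0) (sparse_u 1); rwa [two_mul]
  have hΦh : Φ.mulVec h = -∑ j ∈ Finset.Ico 2 K, Φ.mulVec (u j) := by
    rw [hh, Matrix.mulVec_add]
    exact eq_neg_of_add_eq_zero_left hsplit
  set S : ℝ := ∑ j ∈ Finset.Ico 2 K, l2norm (u j) with hS
  set D : ℝ := l2norm h with hD
  have hdisj01 : ∀ i, u 0 i = 0 ∨ u 1 i = 0 := disj 0 1 (by omega)
  have ha2 : D^2 = l2norm (u 0)^2 + l2norm (u 1)^2 := l2_disj_sq hdisj01
  have hup : l2norm (Φ.mulVec h) ^ 2 ≤ δ * (l2norm (u 0) + l2norm (u 1)) * S := by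
    rw [l2sq_dot]
    have step1 : Φ.mulVec h ⬝ᵥ Φ.mulVec h
        = ∑ j ∈ Finset.Ico 2 K, (Φ.mulVec h ⬝ᵥ (-Φ.mulVec (u j))) := by
      conv_lhs => rw [show Φ.mulVec h = Φ.mulVec h from rfl]
      nth_rewrite 2 [hΦh]
      rw [← Finset.sum_neg_distrib, dot_sum]
    rw [step1, hS, Finset.mul_sum]
    apply Finset.sum_le_sum
    intro j hj
    rw [Finset.mem_Ico] at hj
    have hneg : -Φ.mulVec (u j) = Φ.mulVec (-u j) := by
      rw [Matrix.mulVec_neg]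
    rw [hneg, hh, Matrix.mulVec_add, add_dotProduct]
    have hb0 : Φ.mulVec (u 0) ⬝ᵥ Φ.mulVec (-u j)
        ≤ δ * (l2norm (u 0) * l2norm (-u j)) :=
      rip_inner hδ0.le hΦ (sparse_u 0) (sparse_neg (sparse_u j))
        (fun i => by rcases disj 0 j (by omega) i with hc | hc
                     · exact Or.inl hc
                     · exact Or.inr (by simp [hc]))
    have hb1 : Φ.mulVec (u 1) ⬝ᵥ Φ.mulVec (-u j)
        ≤ δ * (l2norm (u 1) * l2norm (-u j)) :=
      rip_inner hδ0.le hΦ (sparse_u 1) (sparse_neg (sparse_u j))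
        (fun i => by rcases disj 1 j (by omega) i with hc | hc
                     · exact Or.inl hc
                     · exact Or.inr (by simp [hc]))
    rw [l2norm_neg] at hb0 hb1
    have := add_le_add hb0 hb1
    calc Φ.mulVec (u 0) ⬝ᵥ Φ.mulVec (-u j) + Φ.mulVec (u 1) ⬝ᵥ Φ.mulVec (-u j)
        ≤ δ * (l2norm (u 0) * l2norm (u j)) + δ * (l2norm (u 1) * l2norm (u j)) := this
      _ = δ * (l2norm (u 0) + l2norm (u 1)) * l2norm (u j) := by ring
  have hlow : (1 - δ) * D^2 ≤ l2norm (Φ.mulVec h) ^ 2 := (hΦ h hh2s).1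
  have hstack : l2norm (u 0) + l2norm (u 1) ≤ Real.sqrt 2 * D := by
    have h2 : (Real.sqrt 2)^2 = 2 := Real.sq_sqrt (by norm_num)
    apply le_of_sq_le_sq' (mul_nonneg (Real.sqrt_nonneg 2) (l2nonneg h))
    · nlinarith [sq_nonneg (l2norm (u 0) - l2norm (u 1)), ha2]
    · exact add_nonneg (l2nonneg _) (l2nonneg _)
  have hu0D : l2norm (u 0) ≤ D := by
    apply le_of_sq_le_sq' (l2nonneg h) _ (l2nonneg _)
    rw [ha2]
    nlinarith [sq_nonneg (l2norm (u 1))]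
  set P : ℝ := ∑ i ∈ B 0, |v i| with hP'
  set Q : ℝ := ∑ i ∈ (B 0)ᶜ, |v i| with hQ'
  have hss : (Real.sqrt s)^2 = s := Real.sq_sqrt (Nat.cast_nonneg s)
  have hP : P ≤ Real.sqrt s * l2norm (u 0) := by
    apply le_of_sq_le_sq' (mul_nonneg (Real.sqrt_nonneg _) (l2nonneg _))
    · rw [mul_pow, hss, hu, restr_sq]
      calc P^2 ≤ (B 0).card * ∑ i ∈ B 0, |v i|^2 := sq_sum_le_card_mul_sum_sq
        _ ≤ s * ∑ i ∈ B 0, v i ^2 := by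
            apply mul_le_mul
            · exact_mod_cast cardB_le 0
            · exact le_of_eq (Finset.sum_congr rfl fun i _ => sq_abs _)
            · exact Finset.sum_nonneg fun i _ => sq_nonneg _
            · exact Nat.cast_nonneg s
    · exact Finset.sum_nonneg fun i _ => abs_nonneg _
  have blockbound : ∀ j, Real.sqrt s * l2norm (u (j+1)) ≤ ∑ i ∈ B j, |v i| := by
    intro j
    rcases Finset.eq_empty_or_nonempty (B (j+1)) with he | hne
    · have hz : u (j+1) = 0 := funext fun i => if_neg (by simp [he])
      rw [hz, l2norm_zero, mul_zero]
      exact Finset.sum_nonneg fun i _ => abs_nonneg _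
    · have hfull : s ≤ (B j).card := full j hne
      set c : ℝ := ∑ i ∈ B j, |v i| with hc
      have hc0 : 0 ≤ c := Finset.sum_nonneg fun i _ => abs_nonneg _
      have hs' : (0:ℝ) < s := by exact_mod_cast hs
      have hptw : ∀ i ∈ B (j+1), |v i| ≤ c / s := by
        intro i hi
        rw [le_div_iff₀ hs']
        calc |v i| * s = s * |v i| := by ring
          _ ≤ ((B j).card : ℝ) * |v i| := by
              apply mul_le_mul_of_nonneg_right _ (abs_nonneg _)
              exact_mod_cast hfull
          _ ≤ c := by
              have hb : ∀ k ∈ B j, |v i| ≤ |v k| := by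
                intro k hk
                apply anti
                rw [memB] at hi hk
                by_contra hcon
                push_neg at hcon
                have := Nat.div_le_div_right (c := s) (le_of_lt hcon)
                omega
              have := Finset.card_nsmul_le_sum (B j) (fun k => |v k|) (|v i|) hb
              simpa [nsmul_eq_mul] using this
      apply le_of_sq_le_sq' hc0
      · rw [mul_pow, hss, hu, restr_sq]
        have hsum2 : ∑ i ∈ B (j+1), v i ^2 ≤ ((B (j+1)).card : ℝ) * (c/s)^2 := by
          have := Finset.sum_le_card_nsmul (B (j+1)) (fun i => v i ^ 2) ((c/s)^2)
            (fun i hi => by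
              calc v i ^ 2 = |v i| ^ 2 := (sq_abs _).symm
                _ ≤ (c/(s:ℝ))^2 := pow_le_pow_left₀ (abs_nonneg _) (hptw i hi) 2)
          simpa [nsmul_eq_mul] using this
        have hcard : ((B (j+1)).card : ℝ) ≤ s := by exact_mod_cast cardB_le (j+1)
        calc (s:ℝ) * ∑ i ∈ B (j+1), v i ^2
            ≤ s * (((B (j+1)).card : ℝ) * (c/s)^2) := by
              apply mul_le_mul_of_nonneg_left hsum2 hs'.le
          _ ≤ s * ((s:ℝ) * (c/s)^2) := by
              apply mul_le_mul_of_nonneg_left _ hs'.le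
              exact mul_le_mul_of_nonneg_right hcard (sq_nonneg _)
          _ = c^2 := by field_simp
      · exact mul_nonneg (Real.sqrt_nonneg _) (l2nonneg _)
  -- sum over the tail
  have hfiber : ∑ j ∈ Finset.range K, ∑ i ∈ B j, |v i| = ∑ i, |v i| := by
    rw [hB]
    exact Finset.sum_fiberwise_of_maps_to
      (fun i _ => Finset.mem_range.mpr (hKlt i)) (fun i => |v i|)
  have htot : P + Q = ∑ i, |v i| := Finset.sum_add_sum_compl (B 0) _
  have htail : ∑ j ∈ Finset.Ico 1 K, ∑ i ∈ B j, |v i| = Q := by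
    have h01 : ∑ j ∈ Finset.Ico 0 1, ∑ i ∈ B j, |v i| = P := by simp [hP']
    have hcons : ∑ j ∈ Finset.Ico 0 1, (∑ i ∈ B j, |v i|)
        + ∑ j ∈ Finset.Ico 1 K, (∑ i ∈ B j, |v i|)
        = ∑ j ∈ Finset.Ico 0 K, ∑ i ∈ B j, |v i| :=
      Finset.sum_Ico_consecutive _ (Nat.zero_le 1) (by omega)
    have hr : ∑ j ∈ Finset.Ico 0 K, (∑ i ∈ B j, |v i|) = ∑ i, |v i| := by
      rw [← Finset.range_eq_Ico]; exact hfiber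
    linarith [hcons, hr, h01, htot]
  have hSQ : Real.sqrt s * S ≤ Q := by
    rw [hS, Finset.mul_sum]
    calc ∑ j ∈ Finset.Ico 2 K, Real.sqrt s * l2norm (u j)
        ≤ ∑ j ∈ Finset.Ico 2 K, ∑ i ∈ B (j-1), |v i| := by
          apply Finset.sum_le_sum
          intro j hj
          rw [Finset.mem_Ico] at hj
          have : j = (j-1) + 1 := by omega
          rw [this]
          simpa using blockbound (j-1)
      _ = ∑ l ∈ Finset.Ico 1 (K-1), ∑ i ∈ B l, |v i| := by
          apply Finset.sum_nbij' (fun j => j - 1) (fun l => l + 1)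
          · intro a ha; rw [Finset.mem_Ico] at *; omega
          · intro a ha; rw [Finset.mem_Ico] at *; omega
          · intro a ha; rw [Finset.mem_Ico] at ha; omega
          · intro a ha; rw [Finset.mem_Ico] at ha; omega
          · intro a ha; rfl
      _ ≤ ∑ l ∈ Finset.Ico 1 K, ∑ i ∈ B l, |v i| := by
          apply Finset.sum_le_sum_of_subset_of_nonneg
            (Finset.Ico_subset_Ico le_rfl (by omega))
          intro l _ _
          exact Finset.sum_nonneg fun i _ => abs_nonneg _
      _ = Q := htail
  have hQ0 : 0 ≤ Q := Finset.sum_nonneg fun i _ => abs_nonneg _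
  have hS0 : 0 ≤ S := Finset.sum_nonneg fun j _ => l2nonneg _
  have hD0 : 0 ≤ D := l2nonneg _
  have hrs : 0 ≤ Real.sqrt s := Real.sqrt_nonneg _
  have hkey : P ≤ Real.sqrt 2 * δ / (1 - δ) * Q := by
    rcases eq_or_lt_of_le hD0 with hDz | hDz
    · calc P ≤ Real.sqrt s * l2norm (u 0) := hP
        _ ≤ Real.sqrt s * D := mul_le_mul_of_nonneg_left hu0D hrs
        _ = 0 := by rw [← hDz, mul_zero]
        _ ≤ _ := mul_nonneg hγ0 hQ0
    · have hDle : (1 - δ) * D ≤ Real.sqrt 2 * δ * S := by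
        have h1 : (1-δ) * D^2 ≤ δ * (Real.sqrt 2 * D) * S := by
          refine le_trans (le_trans hlow hup) ?_
          apply mul_le_mul_of_nonneg_right _ hS0
          exact mul_le_mul_of_nonneg_left hstack hδ0.le
        nlinarith [h1, hDz]
      calc P ≤ Real.sqrt s * l2norm (u 0) := hP
        _ ≤ Real.sqrt s * D := mul_le_mul_of_nonneg_left hu0D hrs
        _ ≤ Real.sqrt s * (Real.sqrt 2 * δ * S / (1-δ)) := by
            apply mul_le_mul_of_nonneg_left _ hrs
            rw [le_div_iff₀ h1δ]
            linarith [hDle]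
        _ = Real.sqrt 2 * δ / (1-δ) * (Real.sqrt s * S) := by ring
        _ ≤ Real.sqrt 2 * δ / (1-δ) * Q := mul_le_mul_of_nonneg_left hSQ hγ0
  -- compare T with B 0
  have hout : ∀ i ∉ B 0, ∀ k ∈ B 0, |v i| ≤ |v k| := by
    intro i hi k hk
    rw [memB] at hk
    apply anti
    have hknz : (π.symm k : ℕ) < s := by
      by_contra hcon
      push_neg at hcon
      have := (Nat.one_le_div_iff hs).2 hcon
      omega
    have hine : ¬ ((π.symm i : ℕ) / s = 0) := fun hc => hi ((memB 0 i).mpr hc)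
    have : s ≤ (π.symm i : ℕ) := by
      by_contra hcon
      push_neg at hcon
      exact hine (Nat.div_eq_of_lt hcon)
    omega
  have hTB0 : ∑ i ∈ T, |v i| ≤ P := by
    have hTcard : T.card ≤ (B 0).card := by
      rcases le_or_gt s N with hsN | hsN
      · exact le_trans hT (cardB_ge 0 (by omega))
      · have : B 0 = Finset.univ := by
          apply Finset.eq_univ_iff_forall.mpr
          intro i
          rw [memB]
          exact Nat.div_eq_of_lt (by omega)
        rw [this]
        exact Finset.card_le_univ T
    rw [hP', ← Finset.sum_inter_add_sum_sdiff T (B 0) (fun i => |v i|),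
      ← Finset.sum_inter_add_sum_sdiff (B 0) T (fun i => |v i|)]
    apply add_le_add
    · exact le_of_eq (by rw [Finset.inter_comm])
    · apply sum_abs_le_of_card_le
      · have e1 := Finset.card_inter_add_card_sdiff T (B 0)
        have e2 := Finset.card_inter_add_card_sdiff (B 0) T
        have e3 : (T ∩ B 0).card = (B 0 ∩ T).card := by rw [Finset.inter_comm]
        omega
      · intro i hi k hk
        rw [Finset.mem_sdiff] at hi hk
        exact hout i hi.2 k hk.1
  have hcomp : Q ≤ ∑ i ∈ Tᶜ, |v i| := by
    have e1 := Finset.sum_add_sum_compl T (fun i => |v i|)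
    linarith [htot, hTB0]
  calc ∑ i ∈ T, |v i| ≤ P := hTB0
    _ ≤ Real.sqrt 2 * δ / (1 - δ) * Q := hkey
    _ ≤ Real.sqrt 2 * δ / (1 - δ) * ∑ i ∈ Tᶜ, |v i| :=
        mul_le_mul_of_nonneg_left hcomp hγ0
end
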